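/- For the path graph P_n on n ≥ 1 vertices, the burning number equals ⌈√n⌉. -/

import Mathlib

noncomputable def burningNumber {V : Type*} (G : SimpleGraph V) : ℕ :=
  sInf {k | ∃ v : Fin k → V, ∀ u : V, ∃ i : Fin k, G.dist (v i) u ≤ k - 1 - i.val}

open Finset

lemma pg_walk_exists {n : ℕ} : ∀ d (i j : Fin n), j.val = i.val + d →
    ∃ w : (SimpleGraph.pathGraph n).Walk i j, w.length = d := by
  intro d
  induction d with
  | zero =>
    intro i j h
    have : i = j := Fin.ext (by omega)
    subst this; exact ⟨.nil, rfl⟩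
  | succ d ih =>
    intro i j h
    have hj := j.isLt
    have hi : i.val + 1 < n := by omega
    let i' : Fin n := ⟨i.val + 1, hi⟩
    have hadj : (SimpleGraph.pathGraph n).Adj i i' := by
      rw [SimpleGraph.pathGraph_adj]; left; rfl
    obtain ⟨w, hw⟩ := ih i' j (by simp only [i']; omega)
    exact ⟨.cons hadj w, by simp [hw]⟩

lemma pg_walk_ge {n : ℕ} {i j : Fin n} (w : (SimpleGraph.pathGraph n).Walk i j) :
    j.val - i.val ≤ w.length ∧ i.val - j.val ≤ w.length := by
  induction w with
  | nil => simp
  | cons h p ih =>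
    rw [SimpleGraph.pathGraph_adj] at h
    simp only [SimpleGraph.Walk.length_cons]
    omega

lemma pg_dist_of_le {n : ℕ} (i j : Fin n) (h : i.val ≤ j.val) :
    (SimpleGraph.pathGraph n).dist i j = j.val - i.val := by
  obtain ⟨w, hw⟩ := pg_walk_exists (j.val - i.val) i j (by omega)
  refine le_antisymm (hw ▸ SimpleGraph.dist_le w) ?_
  obtain ⟨p, hp⟩ := SimpleGraph.Reachable.exists_walk_length_eq_dist ⟨w⟩
  have := pg_walk_ge p
  omega

lemma pg_dist {n : ℕ} (i j : Fin n) :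
    (SimpleGraph.pathGraph n).dist i j = max i.val j.val - min i.val j.val := by
  rcases le_total i.val j.val with h | h
  · rw [pg_dist_of_le i j h]; omega
  · rw [SimpleGraph.dist_comm, pg_dist_of_le j i h]; omega

lemma sum_cover (k : ℕ) : ∑ i ∈ range k, (2 * (k - 1 - i) + 1) = k ^ 2 := by
  rw [Finset.sum_range_reflect (fun j => 2 * j + 1) k]
  induction k with
  | zero => simp
  | succ m ih => rw [Finset.sum_range_succ, ih]; ring

theorem burning_path (n : ℕ) (hn : 1 ≤ n) :
    burningNumber (SimpleGraph.pathGraph n) = ⌈Real.sqrt n⌉₊ := by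
  set k := ⌈Real.sqrt n⌉₊ with hkdef
  -- basic facts about k
  have hsq : (n : ℝ) = Real.sqrt n * Real.sqrt n := (Real.mul_self_sqrt (by positivity)).symm
  have hk2 : n ≤ k ^ 2 := by
    have h1 : Real.sqrt n ≤ (k : ℝ) := Nat.le_ceil _
    have h2 : (n : ℝ) ≤ (k : ℝ) ^ 2 := by
      rw [hsq, sq]
      exact mul_le_mul h1 h1 (Real.sqrt_nonneg _) (by positivity)
    exact_mod_cast h2
  have hk1 : 1 ≤ k := by nlinarith [hk2, hn]
  -- membership: a burning scheme with k rounds exists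
  have hmem : k ∈ {m | ∃ v : Fin m → Fin n, ∀ u : Fin n,
      ∃ i : Fin m, (SimpleGraph.pathGraph n).dist (v i) u ≤ m - 1 - i.val} := by
    set s : ℕ → ℕ := fun m => ∑ j ∈ range m, (2 * (k - 1 - j) + 1) with hsdef
    have hs0 : s 0 = 0 := by simp [hsdef]
    have hssucc : ∀ m, s (m + 1) = s m + (2 * (k - 1 - m) + 1) := fun m =>
      Finset.sum_range_succ _ m
    have hsk : s k = k ^ 2 := sum_cover k
    refine ⟨fun i => ⟨min (s i.val + (k - 1 - i.val)) (n - 1), by omega⟩, ?_⟩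
    intro u
    have hu := u.isLt
    set P : ℕ → Prop := fun m => s m ≤ u.val with hPdef
    have hP0 : P 0 := by simp [hPdef, hs0]
    set i₀ := Nat.findGreatest P (k - 1) with hi₀def
    have hile : i₀ ≤ k - 1 := Nat.findGreatest_le _
    have hPi : P i₀ := Nat.findGreatest_spec (Nat.zero_le _) hP0
    have hgt : u.val < s (i₀ + 1) := by
      rcases eq_or_lt_of_le hile with heq | hlt
      · have : i₀ + 1 = k := by omega
        rw [this, hsk]; omega
      · have := Nat.findGreatest_is_greatest (P := P) (n := k - 1)
          (k := i₀ + 1) (by omega) (by omega)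
        simpa [hPdef] using not_le.mp (by exact fun hc => this hc)
    refine ⟨⟨i₀, by omega⟩, ?_⟩
    rw [pg_dist]
    simp only
    rw [hssucc] at hgt
    omega
  -- lower bound: any scheme needs n ≤ m ^ 2
  have hlow : ∀ m ∈ {m | ∃ v : Fin m → Fin n, ∀ u : Fin n,
      ∃ i : Fin m, (SimpleGraph.pathGraph n).dist (v i) u ≤ m - 1 - i.val},
      n ≤ m ^ 2 := by
    intro m hm
    obtain ⟨v, hv⟩ := hm
    have hsub : (univ : Finset (Fin n)) ⊆ univ.biUnion (fun i : Fin m =>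
        univ.filter (fun u : Fin n =>
          u.val - (v i).val ≤ m - 1 - i.val ∧ (v i).val - u.val ≤ m - 1 - i.val)) := by
      intro u _
      obtain ⟨i, hi⟩ := hv u
      rw [pg_dist] at hi
      simp only [Finset.mem_biUnion, Finset.mem_filter, Finset.mem_univ, true_and]
      exact ⟨i, ⟨by omega, by omega⟩⟩
    have hball : ∀ (c r : ℕ), (univ.filter (fun u : Fin n =>
        u.val - c ≤ r ∧ c - u.val ≤ r)).card ≤ 2 * r + 1 := by
      intro c r
      have h1 : (univ.filter (fun u : Fin n =>
          u.val - c ≤ r ∧ c - u.val ≤ r)).card ≤ (Finset.Icc (c - r) (c + r)).card := by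
        apply Finset.card_le_card_of_injOn (fun u => u.val)
        · intro u hu
          simp only [Finset.mem_coe, Finset.mem_filter, Finset.mem_univ, true_and] at hu
          simp only [Finset.mem_coe, Finset.mem_Icc]
          omega
        · intro a _ b _ h; exact Fin.ext h
      rw [Nat.card_Icc] at h1
      omega
    calc n = (univ : Finset (Fin n)).card := by simp
      _ ≤ _ := Finset.card_le_card hsub
      _ ≤ ∑ i : Fin m, (univ.filter (fun u : Fin n =>
          u.val - (v i).val ≤ m - 1 - i.val ∧ (v i).val - u.val ≤ m - 1 - i.val)).card :=
        Finset.card_biUnion_le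
      _ ≤ ∑ i : Fin m, (2 * (m - 1 - i.val) + 1) :=
        Finset.sum_le_sum fun i _ => hball _ _
      _ = ∑ i ∈ range m, (2 * (m - 1 - i) + 1) :=
        Fin.sum_univ_eq_sum_range (fun i => 2 * (m - 1 - i) + 1) m
      _ = m ^ 2 := sum_cover m
  refine le_antisymm (Nat.sInf_le hmem) ?_
  refine le_csInf ⟨k, hmem⟩ ?_
  intro m hm
  have hm2 : n ≤ m ^ 2 := hlow m hm
  rw [hkdef]
  rw [Nat.ceil_le]
  have h1 : (n : ℝ) ≤ (m : ℝ) ^ 2 := by exact_mod_cast hm2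
  calc Real.sqrt n ≤ Real.sqrt ((m : ℝ) ^ 2) := Real.sqrt_le_sqrt h1
    _ = m := Real.sqrt_sq (by positivity)
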